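/- The map λ ↦ w_λ is a bijection from the set of all Young diagrams inside the k×(n−k) rectangle onto W^J, the set of minimal length coset representatives of S_n/(S_k × S_{n−k}). -/

import Mathlib

open scoped Classical

set_option maxHeartbeats 1000000
set_option synthInstance.maxHeartbeats 1000000

noncomputable section

/-- The field ℚ(v) of rational functions. -/
abbrev F : Type := RatFunc ℚ

/-- The variable v. -/
def v : F := RatFunc.X

/-- The quantum integer [r] = (v^r - v^{-r})/(v - v^{-1}). -/
def qint (r : ℕ) : F := (v ^ r - v⁻¹ ^ r) / (v - v⁻¹)

/-- Sequences of n signs (`true` = `+`) with exactly k pluses. -/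
abbrev Stt (n k : ℕ) := {ε : Fin n → Bool // (Finset.univ.filter fun t => ε t = true).card = k}

/-- The adjacent transposition s_m ∈ S_n (1-based: swaps positions m and m+1). -/
def sperm (n m : ℕ) : Equiv.Perm (Fin n) :=
  if h : 1 ≤ m ∧ m < n then Equiv.swap ⟨m - 1, by omega⟩ ⟨m, h.2⟩ else 1

/-- Action of w ∈ S_n on sequences: (w·ε)_{w(t)} = ε_t. -/
def actE {n : ℕ} (w : Equiv.Perm (Fin n)) (ε : Fin n → Bool) : Fin n → Bool :=
  fun u => ε (w⁻¹ u)

lemma card_actE {n k : ℕ} (w : Equiv.Perm (Fin n)) (ε : Fin n → Bool)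
    (h : (Finset.univ.filter fun t => ε t = true).card = k) :
    (Finset.univ.filter fun t => actE w ε t = true).card = k := by
  rw [← h]
  apply Finset.card_bij (fun t _ => w⁻¹ t)
  · intro a ha
    simp only [Finset.mem_filter, Finset.mem_univ, true_and, actE] at ha ⊢
    exact (Finset.mem_filter.1 ha).2
  · intro a _ b _ hab
    exact (Equiv.injective _) hab
  · intro b hb
    simp only [Finset.mem_filter, Finset.mem_univ, true_and, actE] at hb ⊢
    exact ⟨w b, Finset.mem_filter.2 ⟨Finset.mem_univ _, by simpa using hb⟩, by simp⟩

/-- Action of S_n on the set E of sequences with k pluses. -/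
def actS {n k : ℕ} (w : Equiv.Perm (Fin n)) (ε : Stt n k) : Stt n k :=
  ⟨actE w ε.1, card_actE w ε.1 ε.2⟩

/-- The module M, free over ℚ(v) with basis E. -/
abbrev M (n k : ℕ) := Stt n k → F

/-- The basis vector of M corresponding to ε ∈ E. -/
def bv {n k : ℕ} (ε : Stt n k) : M n k := Pi.single ε 1

/-- The sequence 𝟏 = (+,…,+,−,…,−) (k pluses then n−k minuses). -/
def oneSeq (n k : ℕ) : Fin n → Bool := fun t => decide ((t : ℕ) < k)

lemma card_oneSeq (n k : ℕ) (h : k ≤ n) :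
    (Finset.univ.filter fun t => oneSeq n k t = true).card = k := by
  have : (Finset.univ.filter fun t => oneSeq n k t = true)
      = Finset.univ.map (Fin.castLEEmb h) := by
    ext t
    simp only [Finset.mem_filter, Finset.mem_univ, true_and, oneSeq, decide_eq_true_eq,
      Finset.mem_map]
    constructor
    · intro ht; exact ⟨⟨t, ht⟩, rfl⟩
    · rintro ⟨s, rfl⟩; exact s.2
  rw [this, Finset.card_map, Finset.card_univ, Fintype.card_fin]

/-- 𝟏 as an element of E. -/
def oneS (n k : ℕ) (h : k ≤ n) : Stt n k := ⟨oneSeq n k, card_oneSeq n k h⟩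

/-- The operator T_m on M (1 ≤ m ≤ n−1), defined on basis elements. -/
def Thk (n k : ℕ) (m : ℕ) : M n k →ₗ[F] M n k :=
  (Pi.basisFun F (Stt n k)).constr ℕ fun ε =>
    if h : 1 ≤ m ∧ m < n then
      let a := ε.1 ⟨m - 1, by omega⟩
      let b := ε.1 ⟨m, h.2⟩
      if a = true ∧ b = false then bv (actS (sperm n m) ε)
      else if a = b then (-v⁻¹) • bv ε
      else bv (actS (sperm n m) ε) + (v - v⁻¹) • bv ε
    else 0

/-- A Young diagram inside the k×(n−k) rectangle, given by its row lengths
(1-based: row i has lam i boxes). -/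
def IsYoung (n k : ℕ) (lam : ℕ → ℕ) : Prop :=
  (∀ i, 1 ≤ i → lam (i + 1) ≤ lam i) ∧ lam 1 ≤ n - k ∧ (∀ i, k < i → lam i = 0)

/-- The boxes of λ, listed row by row from the bottom row to the top row,
each row from its last box to its first (so box (1,1) comes last). -/
def boxList (k : ℕ) (lam : ℕ → ℕ) : List (ℕ × ℕ) :=
  ((List.range k).reverse.map fun i' =>
    (List.range (lam (i' + 1))).reverse.map fun j' => (i' + 1, j' + 1)).flatten

/-- The word of w_λ: letter k+j−i for box (i,j). -/
def wword (k : ℕ) (lam : ℕ → ℕ) : List ℕ := (boxList k lam).map fun b => k + b.2 - b.1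

/-- The permutation w_λ = ∏_{(i,j)∈λ} s_{k+j−i} (box (1,1) rightmost). -/
def wperm (n k : ℕ) (lam : ℕ → ℕ) : Equiv.Perm (Fin n) := ((wword k lam).map (sperm n)).prod

/-- w_λ·𝟏 as an element of E. -/
def wSt (n k : ℕ) (h : k ≤ n) (lam : ℕ → ℕ) : Stt n k := actS (wperm n k lam) (oneS n k h)

/-- r is the system of shifts of λ: r_{ij} = max(r_{i,j+1}, r_{i+1,j}) + 1 on boxes of λ,
and r_{ij} = 0 off λ. -/
def IsShifts (lam : ℕ → ℕ) (r : ℕ → ℕ → ℕ) : Prop :=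
  ∀ i j, r i j = if 1 ≤ i ∧ 1 ≤ j ∧ j ≤ lam i then max (r i (j + 1)) (r (i + 1) j) + 1 else 0

/-- The operator X_λ = ∏_{(i,j)∈λ} (T_{k+j−i} − v^{r_{ij}}/[r_{ij}]), the factor of
box (1,1) applied first. -/
def Xop (n k : ℕ) (lam : ℕ → ℕ) (r : ℕ → ℕ → ℕ) : Module.End F (M n k) :=
  ((boxList k lam).map fun b =>
    (Thk n k (k + b.2 - b.1) - (v ^ r b.1 b.2 / qint (r b.1 b.2)) • (1 : Module.End F (M n k)) : Module.End F (M n k))).prod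

/-- O(v^m): rational functions with a zero of order ≥ m at v = 0. -/
def Ozero (m : ℕ) : Set F :=
  {f | ∃ p q : Polynomial ℚ, Polynomial.eval 0 q ≠ 0 ∧
        f = v ^ m * (algebraMap (Polynomial ℚ) F p / algebraMap (Polynomial ℚ) F q)}

/-- Value of a sequence at the 1-based position t. -/
def posVal {n : ℕ} (ε : Fin n → Bool) (t : ℕ) : Bool :=
  if h : 1 ≤ t ∧ t ≤ n then ε ⟨t - 1, by omega⟩ else false

/-- a(i) = k + λ_i − i + 1 for 1 ≤ i ≤ k, and a(i) = 0 for i > k. -/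
def aF (k : ℕ) (lam : ℕ → ℕ) (i : ℕ) : ℕ := if i ≤ k then k + lam i + 1 - i else 0

/-- The contribution r_t(ε) to the weight. -/
def weightT (k : ℕ) (lam : ℕ → ℕ) (r : ℕ → ℕ → ℕ) {n : ℕ} (ε : Fin n → Bool) (t : ℕ) : ℕ :=
  ∑ i ∈ Finset.Icc 1 k,
    ((if posVal ε t = false ∧ 1 ≤ lam i ∧ t = aF k lam i then r i (lam i) - 1 else 0) +
     (if posVal ε t = true ∧ aF k lam (i + 1) < t ∧ t < aF k lam i then r i (t + i - k) else 0))

/-- The weight r_λ(ε) = Σ_{t=1}^n r_t(ε). -/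
def weight (n k : ℕ) (lam : ℕ → ℕ) (r : ℕ → ℕ → ℕ) (ε : Fin n → Bool) : ℕ :=
  ∑ t ∈ Finset.Icc 1 n, weightT k lam r ε t

/-- 𝓛_λ = Σ_ε O(v^{r_λ(ε)}) ε. -/
def Lset (n k : ℕ) (lam : ℕ → ℕ) (r : ℕ → ℕ → ℕ) : Set (M n k) :=
  {m | ∀ ε : Stt n k, m ε ∈ Ozero (weight n k lam r ε.1)}

/-- The length (number of inversions) of a permutation. -/
def len {n : ℕ} (w : Equiv.Perm (Fin n)) : ℕ :=
  (Finset.univ.filter fun p : Fin n × Fin n => p.1 < p.2 ∧ w p.2 < w p.1).card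

/-- The parabolic subgroup W_J = S_k × S_{n−k}: permutations mapping {1,…,k} to itself. -/
def WJ (n k : ℕ) : Set (Equiv.Perm (Fin n)) :=
  {σ | ∀ t : Fin n, (t : ℕ) < k → ((σ t : ℕ) < k)}

/-- W^J: permutations of minimal length in their coset w·W_J. -/
def Wmin (n k : ℕ) : Set (Equiv.Perm (Fin n)) :=
  {w | ∀ σ ∈ WJ n k, len w ≤ len (w * σ)}

/-- The variable x_p (1-based position p) in ℚ(v)[x_1,…,x_n]. -/
def xv (n p : ℕ) : MvPolynomial (Fin n) F :=
  if h : 1 ≤ p ∧ p ≤ n then MvPolynomial.X ⟨p - 1, by omega⟩ else 0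

/-- Exchange of the variables x_i and x_{i+1} (1-based, 1 ≤ i ≤ n−1). -/
def swapf (n i : ℕ) (f : MvPolynomial (Fin n) F) : MvPolynomial (Fin n) F :=
  if h : 1 ≤ i ∧ i < n then
    MvPolynomial.rename (Equiv.swap ⟨i - 1, by omega⟩ ⟨i, h.2⟩) f
  else f

/-- The divided difference ∂_i f = (f − s_i f)/(x_i − x_{i+1}). -/
def ddiff (n i : ℕ) (f : MvPolynomial (Fin n) F) : MvPolynomial (Fin n) F :=
  if h : ∃ g, f - swapf n i f = (xv n i - xv n (i + 1)) * g then h.choose else 0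

/-- The operator ∇_i f = (v x_{i+1} − v⁻¹ x_i)·∂_i f. -/
def nabla (n i : ℕ) (f : MvPolynomial (Fin n) F) : MvPolynomial (Fin n) F :=
  (MvPolynomial.C v * xv n (i + 1) - MvPolynomial.C v⁻¹ * xv n i) * ddiff n i f

/-- Parenthesis matching: minuses (`false`) are openers, pluses (`true`) are closers;
each plus is matched with the most recent unmatched minus, i.e. each minus with the first
subsequent unmatched plus.  Returns the list of matched pairs (p,q) of 1-based positions
and the list of unmatched minus positions. -/
def matchAux : List Bool → ℕ → List ℕ → List (ℕ × ℕ) × List ℕ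
  | [], _, stack => ([], stack)
  | b :: rest, pos, stack =>
    if b then
      match stack with
      | [] => matchAux rest (pos + 1) []
      | p :: stack' =>
        let res := matchAux rest (pos + 1) stack'
        ((p, pos) :: res.1, res.2)
    else matchAux rest (pos + 1) (pos :: stack)

/-- d(ε) = #{(p,q) : p < q, ε_p = −, ε_q = +}. -/
def dstat {n : ℕ} (ε : Fin n → Bool) : ℕ :=
  (Finset.univ.filter fun pq : Fin n × Fin n =>
    pq.1 < pq.2 ∧ ε pq.1 = false ∧ ε pq.2 = true).card

/-- The polynomial Q_ε. -/
def Qpoly (n : ℕ) (ε : Fin n → Bool) : MvPolynomial (Fin n) F :=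
  MvPolynomial.C (v⁻¹ ^ dstat ε) *
    ((matchAux (List.ofFn ε) 1 []).1.map fun pq =>
        xv n pq.1 - MvPolynomial.C (v ^ (pq.2 + 1 - pq.1)) * xv n pq.2).prod *
    ((matchAux (List.ofFn ε) 1 []).2.map fun p => xv n p).prod

/-- The operator T_m on M′ (the parabolic module induced from T_j ↦ v). -/
def Thk' (n k : ℕ) (m : ℕ) : M n k →ₗ[F] M n k :=
  (Pi.basisFun F (Stt n k)).constr ℕ fun ε =>
    if h : 1 ≤ m ∧ m < n then
      let a := ε.1 ⟨m - 1, by omega⟩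
      let b := ε.1 ⟨m, h.2⟩
      if a = true ∧ b = false then bv (actS (sperm n m) ε)
      else if a = b then v • bv ε
      else bv (actS (sperm n m) ε) + (v - v⁻¹) • bv ε
    else 0

/-- The map Φ : M′ → ℚ(v)[x_1,…,x_n], ε ↦ v^{−d(ε)} ∏_{t : ε_t = −} x_t. -/
def Phi (n k : ℕ) : M n k →ₗ[F] MvPolynomial (Fin n) F :=
  (Pi.basisFun F (Stt n k)).constr ℕ fun ε =>
    MvPolynomial.C (v⁻¹ ^ dstat ε.1) *
      ∏ t ∈ Finset.univ.filter (fun t => ε.1 t = false), MvPolynomial.X t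

/-- The space P(k,n): polynomials homogeneous of total degree n−k, of degree ≤ 1 in each
variable. -/
def Pspace (n k : ℕ) : Set (MvPolynomial (Fin n) F) :=
  {f | f.IsHomogeneous (n - k) ∧ ∀ t : Fin n, f.degreeOf t ≤ 1}

namespace YBaux

/-- coercion formula for swap -/
lemma swap_coe {n : ℕ} (p q x : Fin n) :
    ((Equiv.swap p q x : Fin n) : ℕ) =
      if (x:ℕ) = (p:ℕ) then (q:ℕ) else if (x:ℕ) = (q:ℕ) then (p:ℕ) else (x:ℕ) := by
  rw [Equiv.swap_apply_def]
  split_ifs <;> simp_all [Fin.ext_iff]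

lemma sperm_coe (n m : ℕ) (h1 : 1 ≤ m) (h2 : m < n) (t : Fin n) :
    ((sperm n m t : Fin n) : ℕ) =
      if (t:ℕ) = m - 1 then m else if (t:ℕ) = m then m - 1 else (t:ℕ) := by
  unfold sperm
  rw [dif_pos ⟨h1, h2⟩, swap_coe]

/-- the cycle moving position a to a+L -/
def cyc (n a L : ℕ) : Equiv.Perm (Fin n) :=
  ((List.range L).reverse.map fun j' => sperm n (a + j' + 1)).prod

lemma cyc_succ (n a L : ℕ) : cyc n a (L+1) = sperm n (a + L + 1) * cyc n a L := by
  unfold cyc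
  rw [List.range_succ, List.reverse_append]
  simp

lemma cyc_coe (n a L : ℕ) (h : a + L < n) (t : Fin n) :
    ((cyc n a L t : Fin n) : ℕ) =
      if (t:ℕ) = a then a + L
      else if a < (t:ℕ) ∧ (t:ℕ) ≤ a + L then (t:ℕ) - 1 else (t:ℕ) := by
  induction L with
  | zero =>
    have : cyc n a 0 = 1 := rfl
    rw [this]
    simp only [Equiv.Perm.one_apply]
    split_ifs with h1 h2 <;> omega
  | succ L ih =>
    rw [cyc_succ, Equiv.Perm.mul_apply, sperm_coe n (a+L+1) (by omega) (by omega),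
      ih (by omega)]
    split_ifs <;> omega

end YBaux
namespace YBaux

def Wm (n k : ℕ) (lam : ℕ → ℕ) (m : ℕ) : Equiv.Perm (Fin n) :=
  ((List.range m).reverse.map fun i' => cyc n (k - (i'+1)) (lam (i'+1))).prod

lemma Wm_succ (n k : ℕ) (lam : ℕ → ℕ) (m : ℕ) :
    Wm n k lam (m+1) = cyc n (k - (m+1)) (lam (m+1)) * Wm n k lam m := by
  unfold Wm
  rw [List.range_succ, List.reverse_append]
  simp

lemma wperm_eq_Wm (n k : ℕ) (lam : ℕ → ℕ) : wperm n k lam = Wm n k lam k := by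
  unfold wperm wword boxList Wm cyc
  rw [List.map_flatten, List.map_flatten, List.prod_flatten]
  congr 1
  rw [List.map_map, List.map_map, List.map_map]
  apply List.map_congr_left
  intro i' hi'
  have hik : i' < k := by
    simp only [List.mem_reverse, List.mem_range] at hi'; exact hi'
  simp only [Function.comp_apply, List.map_map]
  refine congrArg List.prod (List.map_congr_left ?_)
  intro j' _
  simp only [Function.comp]
  congr 1
  omega

end YBaux
namespace YBaux

lemma fix_low {n : ℕ} (w : Equiv.Perm (Fin n)) (c : ℕ)
    (hfix : ∀ t : Fin n, (t:ℕ) < c → w t = t) :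
    ∀ t : Fin n, c ≤ (t:ℕ) → c ≤ ((w t : Fin n):ℕ) := by
  intro t ht
  by_contra hlt
  push_neg at hlt
  have h1 : w (w t) = w t := hfix _ hlt
  have h2 : w t = t := w.injective h1
  omega

lemma Wm_spec (n k : ℕ) (lam : ℕ → ℕ)
    (hanti : ∀ i j : ℕ, 1 ≤ i → i ≤ j → lam j ≤ lam i)
    (hmax : ∀ i : ℕ, 1 ≤ i → lam i ≤ n - k)
    (hk : 0 < k) (hkn : k < n) :
    ∀ m : ℕ, m ≤ k →
    (∀ t : Fin n, (t:ℕ) < k - m → Wm n k lam m t = t) ∧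
    (∀ t : Fin n, k - m ≤ (t:ℕ) → (t:ℕ) < k →
        ((Wm n k lam m t : Fin n):ℕ) = (t:ℕ) + lam (k - (t:ℕ))) ∧
    (∀ t u : Fin n, k ≤ (t:ℕ) → (t:ℕ) < (u:ℕ) →
        ((Wm n k lam m t : Fin n):ℕ) < ((Wm n k lam m u : Fin n):ℕ)) := by
  intro m
  induction m with
  | zero =>
    intro _
    have hW : Wm n k lam 0 = 1 := rfl
    refine ⟨fun t ht => by rw [hW]; rfl, fun t ht1 ht2 => by omega,
      fun t u ht htu => by rw [hW]; simpa using htu⟩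
  | succ m ih =>
    intro hm
    obtain ⟨ih1, ih2, ih3⟩ := ih (by omega)
    set a := k - (m+1) with ha
    set L := lam (m+1) with hL
    have hLnk : L ≤ n - k := hmax (m+1) (by omega)
    have haL : a + L < n := by omega
    have hWs : Wm n k lam (m+1) = cyc n a L * Wm n k lam m := Wm_succ n k lam m
    have hge : ∀ t : Fin n, k - m ≤ (t:ℕ) → k - m ≤ ((Wm n k lam m t : Fin n):ℕ) :=
      fix_low _ _ ih1
    refine ⟨?_, ?_, ?_⟩
    · intro t ht
      rw [hWs, Equiv.Perm.mul_apply, ih1 t (by omega)]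
      have := cyc_coe n a L haL t
      have h2 : ((cyc n a L t : Fin n):ℕ) = (t:ℕ) := by rw [this]; split_ifs <;> omega
      exact Fin.ext h2
    · intro t ht1 ht2
      rw [hWs, Equiv.Perm.mul_apply]
      rcases Nat.lt_or_ge (t:ℕ) (k - m) with hcase | hcase
      · -- t = a, the new row
        have hta : (t:ℕ) = a := by omega
        rw [ih1 t (by omega), cyc_coe n a L haL t, if_pos hta]
        have : k - (t:ℕ) = m + 1 := by omega
        rw [this]
        omega
      · -- old rows
        have hv := ih2 t hcase ht2
        have hlam : lam (m+1) ≤ lam (k - (t:ℕ)) := hanti _ _ (by omega) (by omega)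
        rw [cyc_coe n a L haL _, hv]
        split_ifs with h1 h2 <;> omega
    · intro t u ht htu
      rw [hWs, Equiv.Perm.mul_apply, Equiv.Perm.mul_apply]
      have hvt := hge t (by omega)
      have hvu := hge u (by omega)
      have hlt := ih3 t u ht htu
      rw [cyc_coe n a L haL _, cyc_coe n a L haL _]
      split_ifs <;> omega

end YBaux
namespace YBaux

lemma chain_lt (f : ℕ → ℕ) (s t : ℕ) (h : s < t)
    (H : ∀ p, s ≤ p → p + 1 ≤ t → f p < f (p+1)) : f s < f t := by
  induction t with
  | zero => omega
  | succ t ih =>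
    rcases Nat.lt_or_ge s t with h' | h'
    · exact lt_trans (ih h' (fun p hp hp' => H p hp (by omega))) (H t (by omega) (by omega))
    · have : s = t := by omega
      subst this
      exact H s (le_refl _) (by omega)

lemma swap_lt {n : ℕ} (p q a b : Fin n) (hpq : (p:ℕ) + 1 = (q:ℕ))
    (hab : (a:ℕ) < (b:ℕ)) (hne : ¬((a:ℕ) = (p:ℕ) ∧ (b:ℕ) = (q:ℕ))) :
    ((Equiv.swap p q a : Fin n):ℕ) < ((Equiv.swap p q b : Fin n):ℕ) := by
  rw [swap_coe, swap_coe]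
  split_ifs <;> omega

lemma len_mul_swap_lt (n : ℕ) (w : Equiv.Perm (Fin n)) (p q : Fin n)
    (hpq : (p:ℕ) + 1 = (q:ℕ)) (hd : ((w q : Fin n):ℕ) < ((w p : Fin n):ℕ)) :
    len (w * Equiv.swap p q) < len w := by
  set s := Equiv.swap p q with hs
  have hss : ∀ x : Fin n, s (s x) = x := fun x => Equiv.swap_apply_self p q x
  have hsp : s p = q := Equiv.swap_apply_left p q
  have hsq : s q = p := Equiv.swap_apply_right p q
  set A := (Finset.univ.filter fun pr : Fin n × Fin n =>
      pr.1 < pr.2 ∧ (w * s) pr.2 < (w * s) pr.1) with hA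
  set B := (Finset.univ.filter fun pr : Fin n × Fin n =>
      pr.1 < pr.2 ∧ w pr.2 < w pr.1) with hB
  have hmemB : (p, q) ∈ B := by
    simp only [hB, Finset.mem_filter, Finset.mem_univ, true_and]
    exact ⟨by rw [Fin.lt_def]; omega, by rw [Fin.lt_def]; exact hd⟩
  have hcard : A.card = (B.erase (p, q)).card := by
    apply Finset.card_bij' (fun x _ => (s x.1, s x.2)) (fun x _ => (s x.1, s x.2))
    · rintro ⟨x1, x2⟩ hx
      rw [hA, Finset.mem_filter] at hx
      simp only [hA, Finset.mem_filter, Finset.mem_univ, true_and,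
        Equiv.Perm.mul_apply] at hx
      obtain ⟨hx1, hx2⟩ := hx
      have hne : ¬(((x1:Fin n):ℕ) = (p:ℕ) ∧ ((x2:Fin n):ℕ) = (q:ℕ)) := by
        rintro ⟨h1, h2⟩
        have e1 : x1 = p := Fin.ext h1
        have e2 : x2 = q := Fin.ext h2
        rw [e1, e2, hsp, hsq] at hx2
        exact absurd (Fin.lt_def.mp hx2) (by omega)
      simp only [Finset.mem_erase, hB, Finset.mem_filter, Finset.mem_univ, true_and]
      refine ⟨?_, Fin.lt_def.mpr (swap_lt p q x1 x2 hpq (Fin.lt_def.mp hx1) hne), hx2⟩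
      rintro hpair
      have h1 : s x1 = p := congrArg Prod.fst hpair
      have h2 : s x2 = q := congrArg Prod.snd hpair
      have e1 : x1 = s p := by rw [← h1, hss]
      have e2 : x2 = s q := by rw [← h2, hss]
      rw [hsp] at e1; rw [hsq] at e2
      rw [e1, e2, Fin.lt_def] at hx1
      omega
    · rintro ⟨x1, x2⟩ hx
      simp only [Finset.mem_erase, hB, Finset.mem_filter, Finset.mem_univ, true_and] at hx
      obtain ⟨hne', hx1, hx2⟩ := hx
      have hne : ¬(((x1:Fin n):ℕ) = (p:ℕ) ∧ ((x2:Fin n):ℕ) = (q:ℕ)) := by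
        rintro ⟨h1, h2⟩
        exact hne' (by rw [Prod.ext_iff]; exact ⟨Fin.ext h1, Fin.ext h2⟩)
      rw [hA, Finset.mem_filter]
      simp only [hA, Finset.mem_filter, Finset.mem_univ, true_and, Equiv.Perm.mul_apply]
      refine ⟨Fin.lt_def.mpr (swap_lt p q x1 x2 hpq (Fin.lt_def.mp hx1) hne), ?_⟩
      rw [hss, hss]
      exact hx2
    · rintro ⟨x1, x2⟩ _; simp [hss]
    · rintro ⟨x1, x2⟩ _; simp [hss]
  have : len (w * s) = A.card := rfl
  rw [this, hcard, Finset.card_erase_of_mem hmemB]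
  have hpos : 0 < B.card := Finset.card_pos.mpr ⟨(p,q), hmemB⟩
  have : len w = B.card := rfl
  omega

end YBaux
namespace YBaux

lemma WJ_high {n k : ℕ} (σ : Equiv.Perm (Fin n)) (hσ : σ ∈ WJ n k) :
    ∀ t : Fin n, k ≤ (t:ℕ) → k ≤ ((σ t : Fin n):ℕ) := by
  have himg : (Finset.univ.filter fun t : Fin n => (t:ℕ) < k).image σ
      = Finset.univ.filter fun t : Fin n => (t:ℕ) < k := by
    apply Finset.eq_of_subset_of_card_le
    · intro x hx
      simp only [Finset.mem_image, Finset.mem_filter, Finset.mem_univ, true_and] at hx ⊢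
      obtain ⟨a, ha, rfl⟩ := hx
      exact hσ a ha
    · rw [Finset.card_image_of_injective _ σ.injective]
  intro t ht
  by_contra hlt
  push_neg at hlt
  have : σ t ∈ (Finset.univ.filter fun t : Fin n => (t:ℕ) < k).image σ := by
    rw [himg]; simp [hlt]
  simp only [Finset.mem_image, Finset.mem_filter, Finset.mem_univ, true_and] at this
  obtain ⟨a, ha, hae⟩ := this
  have : a = t := σ.injective hae
  omega

lemma inc_mem_Wmin (n k : ℕ) (w : Equiv.Perm (Fin n))
    (h1 : ∀ s t : Fin n, (s:ℕ) < (t:ℕ) → (t:ℕ) < k → ((w s : Fin n):ℕ) < ((w t : Fin n):ℕ))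
    (h2 : ∀ s t : Fin n, k ≤ (s:ℕ) → (s:ℕ) < (t:ℕ) → ((w s : Fin n):ℕ) < ((w t : Fin n):ℕ)) :
    w ∈ Wmin n k := by
  intro σ hσ
  have hσ2 := WJ_high σ hσ
  have hσinv : ∀ t : Fin n, (t:ℕ) < k → ((σ⁻¹ t : Fin n):ℕ) < k := by
    intro t ht
    by_contra hge
    push_neg at hge
    have := hσ2 (σ⁻¹ t) hge
    rw [Equiv.Perm.inv_def, Equiv.apply_symm_apply] at this
    omega
  have hσinv2 : ∀ t : Fin n, k ≤ (t:ℕ) → k ≤ ((σ⁻¹ t : Fin n):ℕ) := by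
    intro t ht
    by_contra hlt
    push_neg at hlt
    have := hσ (σ⁻¹ t) hlt
    rw [Equiv.Perm.inv_def, Equiv.apply_symm_apply] at this
    omega
  -- cross inversion sets
  set C := fun u : Equiv.Perm (Fin n) => (Finset.univ.filter fun pr : Fin n × Fin n =>
      (pr.1:ℕ) < k ∧ k ≤ (pr.2:ℕ) ∧ ((u pr.2 : Fin n):ℕ) < ((u pr.1 : Fin n):ℕ)) with hC
  have hlenw : len w = (C w).card := by
    unfold len
    congr 1
    apply Finset.filter_congr
    rintro ⟨a, b⟩ _
    simp only [Fin.lt_def]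
    constructor
    · rintro ⟨hab, hinv⟩
      rcases Nat.lt_or_ge (b:ℕ) k with hbk | hbk
      · exact absurd (h1 a b hab hbk) (by omega)
      rcases Nat.lt_or_ge (a:ℕ) k with hak | hak
      · exact ⟨hak, hbk, hinv⟩
      · exact absurd (h2 a b hak hab) (by omega)
    · rintro ⟨hak, hbk, hinv⟩
      exact ⟨by omega, hinv⟩
  have hsub : C (w * σ) ⊆ Finset.univ.filter fun pr : Fin n × Fin n =>
      pr.1 < pr.2 ∧ (w * σ) pr.2 < (w * σ) pr.1 := by
    rintro ⟨a, b⟩ hab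
    simp only [hC, Finset.mem_filter, Finset.mem_univ, true_and] at hab ⊢
    obtain ⟨h1', h2', h3'⟩ := hab
    exact ⟨Fin.lt_def.mpr (by omega), Fin.lt_def.mpr h3'⟩
  have hcards : (C (w * σ)).card = (C w).card := by
    apply Finset.card_bij' (fun x _ => (σ x.1, σ x.2)) (fun x _ => (σ⁻¹ x.1, σ⁻¹ x.2))
    · rintro ⟨a, b⟩ hab
      simp only [hC] at hab ⊢
      rw [Finset.mem_filter] at hab ⊢
      simp only [hC, Finset.mem_filter, Finset.mem_univ, true_and,
        Equiv.Perm.mul_apply] at hab ⊢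
      exact ⟨hσ a hab.1, hσ2 b hab.2.1, hab.2.2⟩
    · rintro ⟨a, b⟩ hab
      simp only [hC] at hab ⊢
      rw [Finset.mem_filter] at hab ⊢
      simp only [hC, Finset.mem_filter, Finset.mem_univ, true_and,
        Equiv.Perm.mul_apply] at hab ⊢
      refine ⟨hσinv a hab.1, hσinv2 b hab.2.1, ?_⟩
      rw [Equiv.Perm.inv_def, Equiv.apply_symm_apply, Equiv.apply_symm_apply]
      exact hab.2.2
    · rintro ⟨a, b⟩ _; simp
    · rintro ⟨a, b⟩ _; simp
  calc len w = (C w).card := hlenw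
    _ = (C (w * σ)).card := hcards.symm
    _ ≤ len (w * σ) := Finset.card_le_card hsub

lemma Wmin_inc (n k : ℕ) (w : Equiv.Perm (Fin n)) (hw : w ∈ Wmin n k) :
    (∀ s t : Fin n, (s:ℕ) < (t:ℕ) → (t:ℕ) < k → ((w s : Fin n):ℕ) < ((w t : Fin n):ℕ)) ∧
    (∀ s t : Fin n, k ≤ (s:ℕ) → (s:ℕ) < (t:ℕ) → ((w s : Fin n):ℕ) < ((w t : Fin n):ℕ)) := by
  -- no adjacent descent within blocks
  have hadj : ∀ p : ℕ, ∀ hp : p + 1 < n, (p + 1 < k ∨ k ≤ p) →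
      ((w ⟨p, by omega⟩ : Fin n):ℕ) < ((w ⟨p+1, hp⟩ : Fin n):ℕ) := by
    intro p hp hblock
    by_contra hge
    push_neg at hge
    set P : Fin n := ⟨p, by omega⟩
    set Q : Fin n := ⟨p+1, hp⟩
    have hne : w P ≠ w Q := fun h => by
      have : P = Q := w.injective h
      have := Fin.ext_iff.mp this
      simp [P, Q] at this
    have hd : ((w Q : Fin n):ℕ) < ((w P : Fin n):ℕ) := by
      rcases Nat.lt_or_ge ((w Q : Fin n):ℕ) ((w P : Fin n):ℕ) with h | h
      · exact h
      · exact absurd (Fin.ext (by omega : ((w P : Fin n):ℕ) = ((w Q : Fin n):ℕ))) hne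
    have hWJ : Equiv.swap P Q ∈ WJ n k := by
      intro t ht
      rcases hblock with hb | hb
      · rw [swap_coe]
        simp only [P, Q]
        split_ifs <;> omega
      · rw [Equiv.swap_apply_of_ne_of_ne]
        · exact ht
        · intro h; rw [h] at ht; simp [P] at ht; omega
        · intro h; rw [h] at ht; simp [Q] at ht; omega
    have := hw _ hWJ
    have := len_mul_swap_lt n w P Q (by simp [P, Q]) hd
    omega
  set f : ℕ → ℕ := fun p => if h : p < n then ((w ⟨p, h⟩ : Fin n):ℕ) else 0 with hf
  have hchain : ∀ s t : ℕ, s < t → t < n → (t < k ∨ k ≤ s) → f s < f t := by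
    intro s t hst htn hblock
    apply chain_lt f s t hst
    intro p hp hp'
    have hpn : p + 1 < n := by omega
    have : f p = ((w ⟨p, by omega⟩ : Fin n):ℕ) := by rw [hf]; simp only [dif_pos (by omega : p < n)]
    rw [this]
    have : f (p+1) = ((w ⟨p+1, hpn⟩ : Fin n):ℕ) := by rw [hf]; simp only [dif_pos hpn]
    rw [this]
    exact hadj p hpn (by omega)
  constructor
  · intro s t hst htk
    have := hchain (s:ℕ) (t:ℕ) hst t.isLt (Or.inl htk)
    simpa [hf, dif_pos s.isLt, dif_pos t.isLt, Fin.eta] using this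
  · intro s t hsk hst
    have := hchain (s:ℕ) (t:ℕ) hst t.isLt (Or.inr hsk)
    simpa [hf, dif_pos s.isLt, dif_pos t.isLt, Fin.eta] using this

end YBaux
namespace YBaux

lemma perm_ext_high (n k : ℕ) (u w : Equiv.Perm (Fin n))
    (hlow : ∀ t : Fin n, (t:ℕ) < k → u t = w t)
    (hu : ∀ s t : Fin n, k ≤ (s:ℕ) → (s:ℕ) < (t:ℕ) → ((u s : Fin n):ℕ) < ((u t : Fin n):ℕ))
    (hw : ∀ s t : Fin n, k ≤ (s:ℕ) → (s:ℕ) < (t:ℕ) → ((w s : Fin n):ℕ) < ((w t : Fin n):ℕ)) :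
    u = w := by
  by_contra hne
  have hex : ∃ t : Fin n, u t ≠ w t := by
    by_contra hall
    push_neg at hall
    exact hne (Equiv.ext hall)
  set S := Finset.univ.filter fun t : Fin n => u t ≠ w t with hS
  have hSne : S.Nonempty := by
    obtain ⟨t, ht⟩ := hex
    exact ⟨t, by simp [hS, ht]⟩
  set t₀ := S.max' hSne with ht₀
  have ht₀mem : t₀ ∈ S := S.max'_mem hSne
  have ht₀ne : u t₀ ≠ w t₀ := by simpa [hS] using ht₀mem
  have ht₀k : k ≤ (t₀:ℕ) := by
    by_contra hlt
    push_neg at hlt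
    exact ht₀ne (hlow t₀ hlt)
  have hagree : ∀ s : Fin n, t₀ < s → u s = w s := by
    intro s hs
    by_contra hne'
    have : s ∈ S := by simp [hS, hne']
    have := S.le_max' s this
    rw [← ht₀] at this
    exact absurd hs (by omega)
  have key : ∀ u' w' : Equiv.Perm (Fin n),
      (∀ t : Fin n, (t:ℕ) < k → u' t = w' t) →
      (∀ s t : Fin n, k ≤ (s:ℕ) → (s:ℕ) < (t:ℕ) → ((u' s : Fin n):ℕ) < ((u' t : Fin n):ℕ)) →
      (∀ s : Fin n, t₀ < s → u' s = w' s) →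
      ((u' t₀ : Fin n):ℕ) < ((w' t₀ : Fin n):ℕ) → False := by
    intro u' w' hlow' hu' hag' hlt
    set s := u'⁻¹ (w' t₀) with hs'
    have hus : u' s = w' t₀ := Equiv.apply_symm_apply u' _
    rcases Nat.lt_or_ge (s:ℕ) k with hsk | hsk
    · have : u' s = w' s := hlow' s hsk
      have : w' s = w' t₀ := by rw [← this, hus]
      have : s = t₀ := w'.injective this
      omega
    · have hst : ¬ ((s:ℕ) < (t₀:ℕ)) := by
        intro h
        have := hu' s t₀ hsk h
        omega
      have hne'' : s ≠ t₀ := by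
        intro h
        rw [h] at hus
        omega
      have hgt : (t₀:ℕ) < (s:ℕ) := by
        rcases Nat.lt_trichotomy (s:ℕ) (t₀:ℕ) with h | h | h
        · exact absurd h hst
        · exact absurd (Fin.ext h) hne''
        · exact h
      have := hag' s (Fin.lt_def.mpr hgt)
      rw [this] at hus
      have : s = t₀ := w'.injective hus
      omega
  rcases Nat.lt_trichotomy ((u t₀ : Fin n):ℕ) ((w t₀ : Fin n):ℕ) with h | h | h
  · exact key u w hlow hu hagree h
  · exact ht₀ne (Fin.ext h)
  · exact key w u (fun t ht => (hlow t ht).symm) hw (fun s hs => (hagree s hs).symm) h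

lemma lower_bound (n k : ℕ) (w : Equiv.Perm (Fin n))
    (h1 : ∀ s t : Fin n, (s:ℕ) < (t:ℕ) → (t:ℕ) < k → ((w s : Fin n):ℕ) < ((w t : Fin n):ℕ)) :
    ∀ p : ℕ, ∀ h : p < n, p < k → p ≤ ((w ⟨p, h⟩ : Fin n):ℕ) := by
  intro p
  induction p with
  | zero => intro _ _; omega
  | succ p ih =>
    intro h hk
    have hpn : p < n := by omega
    have := ih hpn (by omega)
    have := h1 ⟨p, hpn⟩ ⟨p+1, h⟩ (by simp) (by simpa using hk)
    omega

lemma anti_chain (lam : ℕ → ℕ) (h : ∀ i, 1 ≤ i → lam (i+1) ≤ lam i) :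
    ∀ i j : ℕ, 1 ≤ i → i ≤ j → lam j ≤ lam i := by
  intro i j hi hij
  induction j with
  | zero => omega
  | succ j ihj =>
    rcases Nat.lt_or_ge i (j+1) with h' | h'
    · exact le_trans (h j (by omega)) (ihj (by omega))
    · have : i = j + 1 := by omega
      rw [this]

end YBaux

/-- λ ↦ w_λ is a bijection from Young diagrams inside the k×(n−k)
rectangle (normalized by λ₀ = 0) onto the set W^J of minimal length coset
representatives of S_n/(S_k × S_(n−k)). -/
theorem young_bij_minimal_reps (n k : ℕ) (hk : 0 < k) (hkn : k < n) :
    Set.BijOn (fun lam => wperm n k lam)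
      {lam : ℕ → ℕ | IsYoung n k lam ∧ lam 0 = 0} (Wmin n k) := by
  have main : ∀ lam : ℕ → ℕ, IsYoung n k lam →
      (∀ t : Fin n, (t:ℕ) < k →
        ((wperm n k lam t : Fin n):ℕ) = (t:ℕ) + lam (k - (t:ℕ))) ∧
      (∀ t u : Fin n, k ≤ (t:ℕ) → (t:ℕ) < (u:ℕ) →
        ((wperm n k lam t : Fin n):ℕ) < ((wperm n k lam u : Fin n):ℕ)) := by
    intro lam hY
    have hanti := YBaux.anti_chain lam hY.1
    have hmax : ∀ i, 1 ≤ i → lam i ≤ n - k := fun i hi =>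
      le_trans (hanti 1 i (le_refl _) hi) hY.2.1
    obtain ⟨_, h2, h3⟩ := YBaux.Wm_spec n k lam hanti hmax hk hkn k (le_refl k)
    exact ⟨fun t ht => by rw [YBaux.wperm_eq_Wm]; exact h2 t (by omega) ht,
           fun t u ht htu => by rw [YBaux.wperm_eq_Wm]; exact h3 t u ht htu⟩
  have mono1 : ∀ lam : ℕ → ℕ, IsYoung n k lam →
      ∀ s t : Fin n, (s:ℕ) < (t:ℕ) → (t:ℕ) < k →
        ((wperm n k lam s : Fin n):ℕ) < ((wperm n k lam t : Fin n):ℕ) := by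
    intro lam hY s t hst htk
    have hanti := YBaux.anti_chain lam hY.1
    obtain ⟨hlow, _⟩ := main lam hY
    rw [hlow s (by omega), hlow t htk]
    have : lam (k - (s:ℕ)) ≤ lam (k - (t:ℕ)) := hanti _ _ (by omega) (by omega)
    omega
  refine ⟨?_, ?_, ?_⟩
  · -- MapsTo
    intro lam hlam
    obtain ⟨hY, _⟩ := hlam
    obtain ⟨_, hhigh⟩ := main lam hY
    exact YBaux.inc_mem_Wmin n k _ (mono1 lam hY) hhigh
  · -- InjOn
    intro lam1 h1 lam2 h2 heq
    obtain ⟨hY1, h01⟩ := h1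
    obtain ⟨hY2, h02⟩ := h2
    simp only at heq
    funext i
    rcases Nat.eq_zero_or_pos i with hi0 | hi
    · rw [hi0, h01, h02]
    rcases Nat.lt_or_ge k i with hik | hik
    · rw [hY1.2.2 i hik, hY2.2.2 i hik]
    · -- 1 ≤ i ≤ k
      have hlt : k - i < n := by omega
      set t : Fin n := ⟨k - i, hlt⟩ with htdef
      have htk : (t:ℕ) < k := by simp [htdef]; omega
      have e1 := (main lam1 hY1).1 t htk
      have e2 := (main lam2 hY2).1 t htk
      have : wperm n k lam1 t = wperm n k lam2 t := by rw [heq]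
      have hval : ((wperm n k lam1 t : Fin n):ℕ) = ((wperm n k lam2 t : Fin n):ℕ) :=
        congrArg _ this
      rw [e1, e2] at hval
      have hki : k - ((t:Fin n):ℕ) = i := by simp [htdef]; omega
      rw [hki] at hval
      omega
  · -- SurjOn
    intro w hw
    obtain ⟨hb1, hb2⟩ := YBaux.Wmin_inc n k w hw
    have hlb := YBaux.lower_bound n k w hb1
    set lam' : ℕ → ℕ := fun i =>
      if h : 1 ≤ i ∧ i ≤ k then ((w ⟨k - i, by omega⟩ : Fin n):ℕ) - (k - i) else 0
      with hlam'
    have hval : ∀ i, 1 ≤ i → i ≤ k →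
        lam' i = ((w ⟨k - i, by omega⟩ : Fin n):ℕ) - (k - i) := by
      intro i hi1 hi2
      rw [hlam']
      simp only [dif_pos (And.intro hi1 hi2)]
    have hY' : IsYoung n k lam' := by
      refine ⟨?_, ?_, ?_⟩
      · intro i hi
        rcases Nat.lt_or_ge k (i+1) with hik | hik
        · have : lam' (i+1) = 0 := by simp only [hlam']; rw [dif_neg (by omega)]
          omega
        · rw [hval (i+1) (by omega) hik, hval i hi (by omega)]
          have hmono := hb1 ⟨k - (i+1), by omega⟩ ⟨k - i, by omega⟩
            (by simp; omega) (by simp; omega)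
          have hl1 := hlb (k - (i+1)) (by omega) (by omega)
          have hl2 := hlb (k - i) (by omega) (by omega)
          omega
      · rw [hval 1 (le_refl _) (by omega)]
        have := (w ⟨k - 1, by omega⟩ : Fin n).isLt
        omega
      · intro i hik
        simp only [hlam']
        rw [dif_neg (by omega)]
    have h0' : lam' 0 = 0 := by simp only [hlam']; rw [dif_neg (by omega)]
    refine ⟨lam', ⟨hY', h0'⟩, ?_⟩
    simp only
    apply YBaux.perm_ext_high n k
    · intro t htk
      apply Fin.ext
      rw [(main lam' hY').1 t htk]
      have h1 : 1 ≤ k - (t:ℕ) := by omega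
      have h2 : k - (t:ℕ) ≤ k := by omega
      rw [hval _ h1 h2]
      have het : (⟨k - (k - (t:ℕ)), by omega⟩ : Fin n) = t := Fin.ext (by simp; omega)
      rw [het]
      have := hlb (t:ℕ) t.isLt htk
      have ht' : (⟨(t:ℕ), t.isLt⟩ : Fin n) = t := Fin.ext rfl
      rw [ht'] at this
      omega
    · exact (main lam' hY').2
    · exact hb2

end
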